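/- arXiv:2302.09497 — 3 statements merged into one kernel-verified Lean document; each statement's English description precedes it below -/
import Mathlib

section
/- The normalized monomials ((p+1) C(p,j))^{1/2} z₀^{p-j} z₁^{j} concentrate away from the region |z₀| ≤ 1/2: the supremum of ((p+1) C(p,j))^{1/2} |z₀|^{p-j} |z₁|^{j} over p/3 ≤ j ≤ 2p/3 and (z₀,z₁) ∈ S³ with |z₀| ≤ 1/2 tends to 0 as p → ∞. -/
open Filter

lemma choose_bound (p j : ℕ) (hjp : j ≤ p) :
    (Nat.choose p j : ℝ) ≤ 3 ^ (p - j) * (3/2) ^ j := by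
  set C : ℝ := (Nat.choose p j : ℝ) with hCdef
  have key : C * ((2/3:ℝ)^j * (1/3:ℝ)^(p-j)) ≤ 1 := by
    have h := add_pow (2/3 : ℝ) (1/3) p
    have h1 : ∑ k ∈ Finset.range (p+1), (2/3:ℝ)^k * (1/3)^(p-k) * (Nat.choose p k : ℝ) = 1 := by
      rw [← h]; norm_num
    have h2 : (2/3:ℝ)^j * (1/3)^(p-j) * (Nat.choose p j : ℝ)
        ≤ ∑ k ∈ Finset.range (p+1), (2/3:ℝ)^k * (1/3)^(p-k) * (Nat.choose p k : ℝ) := by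
      apply Finset.single_le_sum (f := fun k => (2/3:ℝ)^k * (1/3)^(p-k) * (Nat.choose p k : ℝ))
      · intro i _; positivity
      · exact Finset.mem_range.mpr (by omega)
    rw [h1] at h2
    nlinarith [h2]
  have e1 : (2/3:ℝ)^j * (3/2:ℝ)^j = 1 := by rw [← mul_pow]; norm_num
  have e2 : (1/3:ℝ)^(p-j) * (3:ℝ)^(p-j) = 1 := by rw [← mul_pow]; norm_num
  have hpos : (0:ℝ) ≤ (3:ℝ)^(p-j) * (3/2:ℝ)^j := by positivity
  have h3 := mul_le_mul_of_nonneg_right key hpos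
  calc C = C * ((2/3:ℝ)^j * (1/3:ℝ)^(p-j)) * ((3:ℝ)^(p-j) * (3/2:ℝ)^j) := by
        have : C * ((2/3:ℝ)^j * (1/3:ℝ)^(p-j)) * ((3:ℝ)^(p-j) * (3/2:ℝ)^j)
            = C * (((2/3:ℝ)^j * (3/2:ℝ)^j) * ((1/3:ℝ)^(p-j) * (3:ℝ)^(p-j))) := by ring
        rw [this, e1, e2]; ring
    _ ≤ 1 * ((3:ℝ)^(p-j) * (3/2:ℝ)^j) := h3
    _ = (3:ℝ)^(p-j) * (3/2:ℝ)^j := one_mul _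

lemma sq_shuffle (a b : ℝ) (n m k : ℕ) (hk : 2*n = m+k) :
    (a^n*b^m)^2 = (a*b^2)^m * a^k := by
  rw [mul_pow, ← pow_mul, ← pow_mul, show n*2 = m+k by omega, pow_add, mul_pow, ← pow_mul]
  ring

lemma mono_lemma (n m : ℕ) (h : m ≤ 2*n) (u : ℝ) (hu0 : 0 ≤ u) (hu : u ≤ 1/4) :
    u^n * (1-u)^m ≤ (1/4:ℝ)^n * (3/4)^m := by
  have h1u : (0:ℝ) ≤ 1 - u := by linarith
  obtain ⟨k, hk⟩ : ∃ k, 2*n = m + k := ⟨2*n - m, by omega⟩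
  have key : (u^n * (1-u)^m)^2 ≤ ((1/4:ℝ)^n * (3/4)^m)^2 := by
    have eL : (u^n * (1-u)^m)^2 = (u*(1-u)^2)^m * u^k := sq_shuffle _ _ _ _ _ hk
    have eR : ((1/4:ℝ)^n * (3/4)^m)^2 = ((1/4:ℝ)*(3/4)^2)^m * (1/4:ℝ)^k :=
      sq_shuffle _ _ _ _ _ hk
    rw [eL, eR]
    have hb : u*(1-u)^2 ≤ (1/4:ℝ)*(3/4)^2 := by nlinarith [sq_nonneg u, sq_nonneg (1-u)]
    have hb0 : 0 ≤ u*(1-u)^2 := by positivity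
    exact mul_le_mul (pow_le_pow_left₀ hb0 hb m) (pow_le_pow_left₀ hu0 hu k)
      (by positivity) (by positivity)
  have hL0 : 0 ≤ u^n * (1-u)^m := by positivity
  have hR0 : (0:ℝ) ≤ (1/4:ℝ)^n * (3/4)^m := by positivity
  nlinarith [key, hL0, hR0]

/-- The normalized monomials `((p+1) C(p,j))^{1/2} z₀^{p-j} z₁^{j}` concentrate away
from `{|z₀| ≤ 1/2}` on `S³`: the supremum over `p/3 ≤ j ≤ 2p/3` and points of `S³`
with `|z₀| ≤ 1/2` tends to `0` as `p → ∞`. -/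
theorem stmt_5 :
    ∀ ε > (0 : ℝ), ∃ P : ℕ, ∀ p ≥ P, ∀ j : ℕ,
      (p : ℝ) / 3 ≤ (j : ℝ) → (j : ℝ) ≤ 2 * (p : ℝ) / 3 →
      ∀ z₀ z₁ : ℂ, ‖z₀‖ ^ 2 + ‖z₁‖ ^ 2 = 1 → ‖z₀‖ ≤ 1 / 2 →
        Real.sqrt (((p : ℝ) + 1) * (Nat.choose p j : ℝ)) * ‖z₀‖ ^ (p - j) * ‖z₁‖ ^ j ≤ ε := by
  intro ε hε
  set r : ℝ := (243/256 : ℝ) ^ ((1:ℝ)/3) with hrdef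
  have hr0 : 0 < r := Real.rpow_pos_of_pos (by norm_num) _
  have hr1 : r < 1 := Real.rpow_lt_one (by norm_num) (by norm_num) (by norm_num)
  have hlim : Tendsto (fun p : ℕ => ((p:ℝ)+1) * r^p) atTop (nhds 0) := by
    have h1 : Tendsto (fun p : ℕ => ((p:ℝ)^1) * r^p) atTop (nhds 0) :=
      (summable_pow_mul_geometric_of_norm_lt_one (R := ℝ) 1
        (by rw [Real.norm_eq_abs, abs_of_pos hr0]; exact hr1)).tendsto_atTop_zero
    have h2 : Tendsto (fun p : ℕ => r^p) atTop (nhds 0) :=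
      tendsto_pow_atTop_nhds_zero_of_lt_one hr0.le hr1
    have := h1.add h2
    simp only [add_zero] at this
    convert this using 2 with p
    ring
  have hev : ∀ᶠ p : ℕ in atTop, ((p:ℝ)+1)*r^p < ε^2 :=
    hlim.eventually (gt_mem_nhds (by positivity))
  obtain ⟨P, hP⟩ := eventually_atTop.mp hev
  refine ⟨P, ?_⟩
  intro p hp j hj1 hj2 z₀ z₁ hz hz0
  have hx0 : (0:ℝ) ≤ ‖z₀‖ := norm_nonneg _
  have hy0 : (0:ℝ) ≤ ‖z₁‖ := norm_nonneg _
  set x := ‖z₀‖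
  set y := ‖z₁‖
  have hjp : j ≤ p := by
    have : (j:ℝ) ≤ (p:ℝ) := by linarith [Nat.cast_nonneg (α := ℝ) p]
    exact_mod_cast this
  have h3j : 3*j ≤ 2*p := by
    have : ((3*j : ℕ):ℝ) ≤ ((2*p : ℕ):ℝ) := by push_cast; linarith
    exact_mod_cast this
  have hm : j ≤ 2*(p-j) := by omega
  have hn3 : (p:ℝ)/3 ≤ ((p-j:ℕ):ℝ) := by
    rw [Nat.cast_sub hjp]; linarith
  set C : ℝ := (Nat.choose p j : ℝ) with hCdef
  have hC0 : 0 ≤ C := Nat.cast_nonneg _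
  have hC : C ≤ 3^(p-j)*(3/2)^j := choose_bound p j hjp
  set u := x^2 with hudef
  have hu0 : 0 ≤ u := sq_nonneg x
  have hu : u ≤ 1/4 := by nlinarith
  have hyu : y^2 = 1 - u := by rw [hudef]; linarith
  set A := Real.sqrt (((p:ℝ)+1)*C) * x^(p-j) * y^j with hAdef
  have hA0 : 0 ≤ A := by positivity
  have hA2 : A^2 = ((p:ℝ)+1)*C*(u^(p-j)*(1-u)^j) := by
    have hs : Real.sqrt (((p:ℝ)+1)*C)^2 = ((p:ℝ)+1)*C :=
      Real.sq_sqrt (by positivity)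
    rw [hAdef, mul_pow, mul_pow, hs, ← hyu, hudef]
    ring
  have step1 : A^2 ≤ ((p:ℝ)+1)*C*((1/4:ℝ)^(p-j)*(3/4)^j) := by
    rw [hA2]
    exact mul_le_mul_of_nonneg_left (mono_lemma (p-j) j hm u hu0 hu) (by positivity)
  have step2 : ((p:ℝ)+1)*C*((1/4:ℝ)^(p-j)*(3/4)^j)
      ≤ ((p:ℝ)+1)*((3/4:ℝ)^(p-j)*(9/8)^j) := by
    have : ((p:ℝ)+1)*C*((1/4:ℝ)^(p-j)*(3/4)^j)
        ≤ ((p:ℝ)+1)*((3:ℝ)^(p-j)*(3/2)^j)*((1/4:ℝ)^(p-j)*(3/4)^j) := by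
      apply mul_le_mul_of_nonneg_right _ (by positivity)
      exact mul_le_mul_of_nonneg_left hC (by positivity)
    refine this.trans (le_of_eq ?_)
    have e1 : (3:ℝ)^(p-j) * (1/4:ℝ)^(p-j) = (3/4:ℝ)^(p-j) := by rw [← mul_pow]; norm_num
    have e2 : (3/2:ℝ)^j * (3/4:ℝ)^j = (9/8:ℝ)^j := by rw [← mul_pow]; norm_num
    calc ((p:ℝ)+1)*((3:ℝ)^(p-j)*(3/2)^j)*((1/4:ℝ)^(p-j)*(3/4)^j)
        = ((p:ℝ)+1)*(((3:ℝ)^(p-j)*(1/4:ℝ)^(p-j)) * ((3/2:ℝ)^j*(3/4:ℝ)^j)) := by ring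
      _ = ((p:ℝ)+1)*((3/4:ℝ)^(p-j)*(9/8)^j) := by rw [e1, e2]
  have step3 : ((p:ℝ)+1)*((3/4:ℝ)^(p-j)*(9/8)^j)
      ≤ ((p:ℝ)+1)*(243/256:ℝ)^(p-j) := by
    have h98 : (9/8:ℝ)^j ≤ (9/8:ℝ)^(2*(p-j)) :=
      pow_le_pow_right₀ (by norm_num) hm
    have : (3/4:ℝ)^(p-j)*(9/8)^j ≤ (3/4:ℝ)^(p-j)*(9/8:ℝ)^(2*(p-j)) :=
      mul_le_mul_of_nonneg_left h98 (by positivity)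
    refine (mul_le_mul_of_nonneg_left this (by positivity)).trans (le_of_eq ?_)
    congr 1
    rw [pow_mul, ← mul_pow]
    norm_num
  have step4 : ((243:ℝ)/256)^(p-j) ≤ r^p := by
    have e1 : ((243:ℝ)/256)^(p-j) = ((243:ℝ)/256)^(((p-j:ℕ):ℝ)) :=
      (Real.rpow_natCast _ _).symm
    have e2 : r^p = ((243:ℝ)/256)^((p:ℝ)/3) := by
      rw [← Real.rpow_natCast r p, hrdef, ← Real.rpow_mul (by norm_num)]
      congr 1
      ring
    rw [e1, e2]
    exact Real.rpow_le_rpow_of_exponent_ge (by norm_num) (by norm_num) hn3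
  have final : A^2 < ε^2 := by
    have h5 : ((p:ℝ)+1)*(243/256:ℝ)^(p-j) ≤ ((p:ℝ)+1)*r^p :=
      mul_le_mul_of_nonneg_left step4 (by positivity)
    have := hP p hp
    linarith [step1, step2, step3]
  nlinarith [final, hA0, hε]
end

section
/- Let θ be an irrational real number. The two matrices c₁ = diag rotation by angle θπ about the z-axis and c₂ = rotation by angle θπ about the x-axis generate a dense subgroup of SO(3). -/
open Matrix

noncomputable def Rzm (a : ℝ) : Matrix (Fin 3) (Fin 3) ℝ :=
  !![Real.cos a, -Real.sin a, 0; Real.sin a, Real.cos a, 0; 0, 0, 1]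

noncomputable def Rxm (a : ℝ) : Matrix (Fin 3) (Fin 3) ℝ :=
  !![1, 0, 0; 0, Real.cos a, -Real.sin a; 0, Real.sin a, Real.cos a]

lemma Rzm_mul (a b : ℝ) : Rzm a * Rzm b = Rzm (a + b) := by
  ext i j
  fin_cases i <;> fin_cases j <;>
    simp [Rzm, Matrix.mul_apply, Fin.sum_univ_succ, Matrix.vecHead, Matrix.vecTail, Real.cos_add, Real.sin_add] <;> ring

lemma Rxm_mul (a b : ℝ) : Rxm a * Rxm b = Rxm (a + b) := by
  ext i j
  fin_cases i <;> fin_cases j <;>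
    simp [Rxm, Matrix.mul_apply, Fin.sum_univ_succ, Matrix.vecHead, Matrix.vecTail, Real.cos_add, Real.sin_add] <;> ring

lemma Rzm_zero : Rzm 0 = 1 := by
  ext i j; fin_cases i <;> fin_cases j <;> simp [Rzm, Matrix.vecHead, Matrix.vecTail]

lemma Rxm_zero : Rxm 0 = 1 := by
  ext i j; fin_cases i <;> fin_cases j <;> simp [Rxm, Matrix.vecHead, Matrix.vecTail]

lemma Rzm_neg (a : ℝ) : Rzm (-a) = (Rzm a)ᵀ := by
  ext i j; fin_cases i <;> fin_cases j <;> simp [Rzm, Matrix.vecHead, Matrix.vecTail]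

lemma Rxm_neg (a : ℝ) : Rxm (-a) = (Rxm a)ᵀ := by
  ext i j; fin_cases i <;> fin_cases j <;> simp [Rxm, Matrix.vecHead, Matrix.vecTail]

lemma Rzm_mul_transpose (a : ℝ) : Rzm a * (Rzm a)ᵀ = 1 := by
  rw [← Rzm_neg, Rzm_mul, add_neg_cancel, Rzm_zero]

lemma Rxm_mul_transpose (a : ℝ) : Rxm a * (Rxm a)ᵀ = 1 := by
  rw [← Rxm_neg, Rxm_mul, add_neg_cancel, Rxm_zero]

lemma Rzm_det (a : ℝ) : (Rzm a).det = 1 := by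
  simp [Rzm, Matrix.det_fin_three]
  nlinarith [Real.sin_sq_add_cos_sq a]

lemma Rxm_det (a : ℝ) : (Rxm a).det = 1 := by
  simp [Rxm, Matrix.det_fin_three]
  nlinarith [Real.sin_sq_add_cos_sq a]

lemma Rzm_continuous : Continuous Rzm := by
  apply continuous_matrix
  intro i j
  fin_cases i <;> fin_cases j <;> simp [Rzm] <;> fun_prop

lemma Rxm_continuous : Continuous Rxm := by
  apply continuous_matrix
  intro i j
  fin_cases i <;> fin_cases j <;> simp [Rxm] <;> fun_prop

lemma Rzm_Rxm (a b : ℝ) :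
    Rzm a * Rxm b =
      !![Real.cos a, -Real.sin a * Real.cos b, Real.sin a * Real.sin b;
         Real.sin a, Real.cos a * Real.cos b, -(Real.cos a * Real.sin b);
         0, Real.sin b, Real.cos b] := by
  ext i j
  fin_cases i <;> fin_cases j <;>
    simp [Rzm, Rxm, Matrix.mul_apply, Fin.sum_univ_succ, Matrix.vecHead, Matrix.vecTail]

lemma exists_cos_sin {a b : ℝ} (h : a ^ 2 + b ^ 2 = 1) :
    ∃ t : ℝ, Real.cos t = a ∧ Real.sin t = b := by
  have ha1 : -1 ≤ a := by nlinarith [sq_nonneg b]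
  have ha2 : a ≤ 1 := by nlinarith [sq_nonneg b]
  by_cases hb : 0 ≤ b
  · exact ⟨Real.arccos a, Real.cos_arccos ha1 ha2, by
      rw [Real.sin_arccos, show (1:ℝ) - a ^ 2 = b ^ 2 by linarith, Real.sqrt_sq hb]⟩
  · refine ⟨-Real.arccos a, by rw [Real.cos_neg]; exact Real.cos_arccos ha1 ha2, ?_⟩
    rw [Real.sin_neg, Real.sin_arccos, show (1:ℝ) - a ^ 2 = b ^ 2 by linarith,
      Real.sqrt_sq_eq_abs, abs_of_neg (not_le.1 hb), neg_neg]

lemma Rzm_Rxm_t (a b : ℝ) :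
    (Rzm a * Rxm b)ᵀ =
      !![Real.cos a, Real.sin a, 0;
         -Real.sin a * Real.cos b, Real.cos a * Real.cos b, Real.sin b;
         Real.sin a * Real.sin b, -(Real.cos a * Real.sin b), Real.cos b] := by
  rw [Rzm_Rxm]
  ext i j
  fin_cases i <;> fin_cases j <;> simp [Matrix.vecHead, Matrix.vecTail]

set_option maxHeartbeats 1600000 in
/-- Euler-angle decomposition of a special orthogonal 3×3 matrix. -/
lemma euler (A : Matrix (Fin 3) (Fin 3) ℝ) (hA : Aᵀ * A = 1) (hdet : A.det = 1) :
    ∃ α β γ : ℝ, A = Rzm α * Rxm β * Rzm γ := by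
  have hcol : A 0 2 ^ 2 + A 1 2 ^ 2 + A 2 2 ^ 2 = 1 := by
    have h := congrArg (fun M => M 2 2) hA
    simp [Matrix.mul_apply, Fin.sum_univ_succ, Matrix.one_apply] at h
    nlinarith [h]
  set x := A 0 2 with hxdef
  set y := A 1 2 with hydef
  set z := A 2 2 with hzdef
  have hz1 : -1 ≤ z := by nlinarith [sq_nonneg x, sq_nonneg y]
  have hz2 : z ≤ 1 := by nlinarith [sq_nonneg x, sq_nonneg y]
  set β := Real.arccos z with hβdef
  have hcosβ : Real.cos β = z := Real.cos_arccos hz1 hz2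
  have hs_sq : Real.sin β ^ 2 = x ^ 2 + y ^ 2 := by
    rw [hβdef, Real.sin_arccos, Real.sq_sqrt (by nlinarith)]
    linarith
  obtain ⟨α, hcα, hsα⟩ : ∃ α : ℝ, Real.cos α * Real.sin β = -y ∧ Real.sin α * Real.sin β = x := by
    by_cases hs : Real.sin β = 0
    · have hxy : x ^ 2 + y ^ 2 = 0 := by rw [← hs_sq, hs]; ring
      have hx0 : x = 0 := by nlinarith [sq_nonneg x, sq_nonneg y]
      have hy0 : y = 0 := by nlinarith [sq_nonneg x, sq_nonneg y]
      exact ⟨0, by simp [hs, hy0], by simp [hs, hx0]⟩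
    · obtain ⟨α, h1, h2⟩ := exists_cos_sin (a := -y / Real.sin β) (b := x / Real.sin β)
        (by field_simp; linarith [hs_sq])
      refine ⟨α, ?_, ?_⟩
      · rw [h1]; field_simp
      · rw [h2]; field_simp
  have hRRt : (Rzm α * Rxm β) * (Rzm α * Rxm β)ᵀ = 1 := by
    rw [Matrix.transpose_mul, mul_assoc, ← mul_assoc (Rxm β), Rxm_mul_transpose,
      one_mul, Rzm_mul_transpose]
  set B := (Rzm α * Rxm β)ᵀ * A with hBdef
  have hAB : A = (Rzm α * Rxm β) * B := by
    rw [hBdef, ← mul_assoc, hRRt, one_mul]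
  have hBorth : Bᵀ * B = 1 := by
    rw [hBdef, Matrix.transpose_mul, Matrix.transpose_transpose, mul_assoc,
      ← mul_assoc (Rzm α * Rxm β), hRRt, one_mul, hA]
  have hBBt : B * Bᵀ = 1 := mul_eq_one_comm.mp hBorth
  have hBdet : B.det = 1 := by
    rw [hBdef, Matrix.det_mul, Matrix.det_transpose, Matrix.det_mul, Rzm_det, Rxm_det, hdet]
    norm_num
  -- third column of B
  have hB02 : B 0 2 = 0 := by
    rw [hBdef, Rzm_Rxm_t]
    simp [Matrix.mul_apply, Fin.sum_univ_succ, Matrix.vecHead, Matrix.vecTail,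
      ← hxdef, ← hydef, ← hzdef]
    by_cases hs : Real.sin β = 0
    · have hxy : x ^ 2 + y ^ 2 = 0 := by rw [← hs_sq, hs]; ring
      have hx0 : x = 0 := by nlinarith [sq_nonneg x, sq_nonneg y]
      have hy0 : y = 0 := by nlinarith [sq_nonneg x, sq_nonneg y]
      rw [hx0, hy0]; ring
    · apply mul_left_cancel₀ hs
      linear_combination x * hcα + y * hsα
  have hB12 : B 1 2 = 0 := by
    rw [hBdef, Rzm_Rxm_t]
    simp [Matrix.mul_apply, Fin.sum_univ_succ, Matrix.vecHead, Matrix.vecTail,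
      ← hxdef, ← hydef, ← hzdef]
    by_cases hs : Real.sin β = 0
    · have hxy : x ^ 2 + y ^ 2 = 0 := by rw [← hs_sq, hs]; ring
      have hx0 : x = 0 := by nlinarith [sq_nonneg x, sq_nonneg y]
      have hy0 : y = 0 := by nlinarith [sq_nonneg x, sq_nonneg y]
      rw [hx0, hy0, hs]; ring
    · apply mul_left_cancel₀ hs
      linear_combination (-(Real.cos β) * x) * hsα + (Real.cos β * y) * hcα + z * hs_sq - (x ^ 2 + y ^ 2) * hcosβ
  have hB22 : B 2 2 = 1 := by
    rw [hBdef, Rzm_Rxm_t]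
    simp [Matrix.mul_apply, Fin.sum_univ_succ, Matrix.vecHead, Matrix.vecTail,
      ← hxdef, ← hydef, ← hzdef]
    linear_combination x * hsα - y * hcα + z * hcosβ + hcol
  -- third row of B is (0,0,1)
  have hrow : B 2 0 ^ 2 + B 2 1 ^ 2 + B 2 2 ^ 2 = 1 := by
    have h := congrArg (fun M => M 2 2) hBBt
    simp [Matrix.mul_apply, Fin.sum_univ_succ, Matrix.one_apply] at h
    nlinarith [h]
  have hB20 : B 2 0 = 0 := by nlinarith [sq_nonneg (B 2 0), sq_nonneg (B 2 1), hB22]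
  have hB21 : B 2 1 = 0 := by nlinarith [sq_nonneg (B 2 0), sq_nonneg (B 2 1), hB22]
  -- 2×2 block relations
  have h00 : B 0 0 ^ 2 + B 1 0 ^ 2 = 1 := by
    have h := congrArg (fun M => M 0 0) hBorth
    simp [Matrix.mul_apply, Fin.sum_univ_succ, Matrix.one_apply, hB20] at h
    nlinarith [h]
  have h01 : B 0 0 * B 0 1 + B 1 0 * B 1 1 = 0 := by
    have h := congrArg (fun M => M 0 1) hBorth
    simp [Matrix.mul_apply, Fin.sum_univ_succ, Matrix.one_apply, hB20, hB21] at h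
    linarith [h]
  have hdet2 : B 0 0 * B 1 1 - B 0 1 * B 1 0 = 1 := by
    have h := hBdet
    rw [Matrix.det_fin_three] at h
    rw [hB20, hB21, hB22, hB02, hB12] at h
    linarith [h]
  have hb : B 0 1 = -(B 1 0) := by
    linear_combination (-(B 0 1)) * h00 + B 0 0 * h01 - B 1 0 * hdet2
  have hd : B 1 1 = B 0 0 := by
    linear_combination (-(B 1 1)) * h00 + B 1 0 * h01 + B 0 0 * hdet2
  obtain ⟨γ, hcγ, hsγ⟩ := exists_cos_sin (a := B 0 0) (b := B 1 0) h00
  have hBγ : B = Rzm γ := by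
    ext i j
    fin_cases i <;> fin_cases j <;>
      simp [Rzm, Matrix.vecHead, Matrix.vecTail, hcγ, hsγ, hb, hd, hB02, hB12, hB22, hB20, hB21]
  exact ⟨α, β, γ, by rw [hAB, hBγ]⟩

lemma Rzm_two_pi : Rzm (2 * Real.pi) = 1 := by
  ext i j
  fin_cases i <;> fin_cases j <;>
    simp [Rzm, Matrix.vecHead, Matrix.vecTail, Real.cos_two_pi, Real.sin_two_pi]

lemma Rxm_two_pi : Rxm (2 * Real.pi) = 1 := by
  ext i j
  fin_cases i <;> fin_cases j <;>
    simp [Rxm, Matrix.vecHead, Matrix.vecTail, Real.cos_two_pi, Real.sin_two_pi]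

lemma dense_sub (θ : ℝ) (hθ : Irrational θ) :
    Dense ((AddSubgroup.closure ({θ * Real.pi, 2 * Real.pi} : Set ℝ) : Set ℝ)) := by
  rcases AddSubgroup.dense_or_cyclic
      (AddSubgroup.closure ({θ * Real.pi, 2 * Real.pi} : Set ℝ)) with h | ⟨a, ha⟩
  · exact h
  · exfalso
    have h1 : θ * Real.pi ∈ AddSubgroup.closure ({θ * Real.pi, 2 * Real.pi} : Set ℝ) :=
      AddSubgroup.subset_closure (Set.mem_insert _ _)
    have h2 : 2 * Real.pi ∈ AddSubgroup.closure ({θ * Real.pi, 2 * Real.pi} : Set ℝ) :=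
      AddSubgroup.subset_closure (Set.mem_insert_of_mem _ rfl)
    rw [ha, AddSubgroup.mem_closure_singleton] at h1 h2
    obtain ⟨m, hm⟩ := h1
    obtain ⟨n, hn⟩ := h2
    rw [zsmul_eq_mul] at hm hn
    have hπ : Real.pi ≠ 0 := Real.pi_ne_zero
    have hn0 : (n : ℝ) ≠ 0 := by
      intro h
      rw [h, zero_mul] at hn
      exact hπ (by linarith [Real.pi_pos, hn])
    have hkey : (n : ℝ) * θ = 2 * m := by
      have h3 : (n : ℝ) * (θ * Real.pi) = (m : ℝ) * (2 * Real.pi) := by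
        rw [← hm, ← hn]; ring
      have h4 : ((n : ℝ) * θ) * Real.pi = (2 * m) * Real.pi := by linarith [h3]
      exact mul_right_cancel₀ hπ h4
    have hθeq : θ = ((2 * m / n : ℚ) : ℝ) := by
      push_cast
      field_simp
      linarith [hkey]
    rw [hθeq] at hθ
    exact Rat.not_irrational _ hθ

lemma mem_closure_of_one_param {f : ℝ → Matrix (Fin 3) (Fin 3) ℝ}
    {M : Submonoid (Matrix (Fin 3) (Fin 3) ℝ)}
    (hf : Continuous f) (hmul : ∀ a b : ℝ, f a * f b = f (a + b)) (hzero : f 0 = 1)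
    {c d : ℝ} (hdense : Dense ((AddSubgroup.closure ({c, d} : Set ℝ) : Set ℝ)))
    (hc : f c ∈ M) (hc' : f (-c) ∈ M) (hd : f d ∈ M) (hd' : f (-d) ∈ M) (a : ℝ) :
    f a ∈ closure (M : Set (Matrix (Fin 3) (Fin 3) ℝ)) := by
  have key : ∀ g ∈ AddSubgroup.closure ({c, d} : Set ℝ), f g ∈ M ∧ f (-g) ∈ M := by
    intro g hg
    induction hg using AddSubgroup.closure_induction with
    | mem x hx =>
      simp only [Set.mem_insert_iff, Set.mem_singleton_iff] at hx
      rcases hx with rfl | rfl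
      · exact ⟨hc, hc'⟩
      · exact ⟨hd, hd'⟩
    | zero => exact ⟨hzero ▸ one_mem M, by rw [neg_zero, hzero]; exact one_mem M⟩
    | add x y hx hy ihx ihy =>
      exact ⟨by rw [← hmul]; exact mul_mem ihx.1 ihy.1,
        by rw [show -(x + y) = -y + -x by ring, ← hmul]; exact mul_mem ihy.2 ihx.2⟩
    | neg x hx ih => exact ⟨ih.2, by rw [neg_neg]; exact ih.1⟩
  have hclosed : IsClosed {t : ℝ | f t ∈ closure (M : Set (Matrix (Fin 3) (Fin 3) ℝ))} :=
    isClosed_closure.preimage hf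
  have hsub : (AddSubgroup.closure ({c, d} : Set ℝ) : Set ℝ) ⊆
      {t : ℝ | f t ∈ closure (M : Set (Matrix (Fin 3) (Fin 3) ℝ))} :=
    fun g hg => subset_closure (key g hg).1
  have ha : a ∈ closure ((AddSubgroup.closure ({c, d} : Set ℝ) : Set ℝ)) := by
    rw [hdense.closure_eq]; trivial
  exact closure_minimal hsub hclosed ha

/-- For irrational `θ`, the rotations `c₁` (about the z-axis) and `c₂` (about the
x-axis) by angle `θπ` generate a dense subgroup of `SO(3)`: every special orthogonal
`3×3` matrix lies in the closure of the subgroup (= submonoid generated by the two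
rotations and their inverses, i.e. transposes). -/
theorem stmt_6 (θ : ℝ) (hθ : Irrational θ) :
    ∀ A : Matrix (Fin 3) (Fin 3) ℝ, A.transpose * A = 1 → A.det = 1 →
      A ∈ closure
        (↑(Submonoid.closure
            ({!![Real.cos (θ * Real.pi), -Real.sin (θ * Real.pi), 0;
                 Real.sin (θ * Real.pi), Real.cos (θ * Real.pi), 0;
                 0, 0, 1],
              !![1, 0, 0;
                 0, Real.cos (θ * Real.pi), -Real.sin (θ * Real.pi);
                 0, Real.sin (θ * Real.pi), Real.cos (θ * Real.pi)],
              (!![Real.cos (θ * Real.pi), -Real.sin (θ * Real.pi), 0;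
                 Real.sin (θ * Real.pi), Real.cos (θ * Real.pi), 0;
                 0, 0, 1] : Matrix (Fin 3) (Fin 3) ℝ).transpose,
              (!![1, 0, 0;
                 0, Real.cos (θ * Real.pi), -Real.sin (θ * Real.pi);
                 0, Real.sin (θ * Real.pi), Real.cos (θ * Real.pi)] : Matrix (Fin 3) (Fin 3) ℝ).transpose}
              : Set (Matrix (Fin 3) (Fin 3) ℝ))) : Set (Matrix (Fin 3) (Fin 3) ℝ)) := by
  intro A hA hdet
  obtain ⟨α, β, γ, hEuler⟩ := euler A hA hdet
  show A ∈ closure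
      ((Submonoid.closure ({Rzm (θ * Real.pi), Rxm (θ * Real.pi),
        (Rzm (θ * Real.pi))ᵀ, (Rxm (θ * Real.pi))ᵀ} : Set (Matrix (Fin 3) (Fin 3) ℝ)) :
        Set (Matrix (Fin 3) (Fin 3) ℝ)))
  set M := Submonoid.closure ({Rzm (θ * Real.pi), Rxm (θ * Real.pi),
    (Rzm (θ * Real.pi))ᵀ, (Rxm (θ * Real.pi))ᵀ} : Set (Matrix (Fin 3) (Fin 3) ℝ)) with hM
  have hdense := dense_sub θ hθ
  have hzc : Rzm (θ * Real.pi) ∈ M := Submonoid.subset_closure (by simp)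
  have hzc' : Rzm (-(θ * Real.pi)) ∈ M := by
    rw [Rzm_neg]; exact Submonoid.subset_closure (by simp)
  have hzd : Rzm (2 * Real.pi) ∈ M := by rw [Rzm_two_pi]; exact one_mem M
  have hzd' : Rzm (-(2 * Real.pi)) ∈ M := by
    rw [Rzm_neg, Rzm_two_pi, Matrix.transpose_one]; exact one_mem M
  have hxc : Rxm (θ * Real.pi) ∈ M := Submonoid.subset_closure (by simp)
  have hxc' : Rxm (-(θ * Real.pi)) ∈ M := by
    rw [Rxm_neg]; exact Submonoid.subset_closure (by simp)
  have hxd : Rxm (2 * Real.pi) ∈ M := by rw [Rxm_two_pi]; exact one_mem M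
  have hxd' : Rxm (-(2 * Real.pi)) ∈ M := by
    rw [Rxm_neg, Rxm_two_pi, Matrix.transpose_one]; exact one_mem M
  have hz := mem_closure_of_one_param Rzm_continuous Rzm_mul Rzm_zero hdense hzc hzc' hzd hzd'
  have hx := mem_closure_of_one_param Rxm_continuous Rxm_mul Rxm_zero hdense hxc hxc' hxd hxd'
  have hmemA : A ∈ M.topologicalClosure := by
    have h1 : Rzm α ∈ M.topologicalClosure := hz α
    have h2 : Rxm β ∈ M.topologicalClosure := hx β
    have h3 : Rzm γ ∈ M.topologicalClosure := hz γ
    rw [hEuler]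
    exact mul_mem (mul_mem h1 h2) h3
  exact hmemA
end

section
/- Von Neumann mean ergodic theorem with identification of the limit: let (U_t) be a strongly continuous one-parameter unitary group on a Hilbert space H. Then for each v ∈ H, the time averages (1/T)∫₀^T U_t v dt converge in norm as T → ∞ to the orthogonal projection of v onto the space of (U_t)-invariant vectors; moreover the limits as T → +∞ and T → −∞ agree. -/
open scoped ComplexInnerProductSpace
open Filter MeasureTheory intervalIntegral

set_option linter.unusedSectionVars false

namespace Stmt15Aux

variable {E : Type*} [NormedAddCommGroup E] [InnerProductSpace ℂ E] [CompleteSpace E]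

section

variable (U : ℝ → E →L[ℂ] E)

/-- time average -/
noncomputable def A (T : ℝ) (v : E) : E := (1 / T) • ∫ t in (0:ℝ)..T, U t v

/-- invariant subspace -/
def invS : Submodule ℂ E where
  carrier := {w | ∀ t, U t w = w}
  add_mem' := by intro a b ha hb t; simp [map_add, ha t, hb t]
  zero_mem' := by intro t; simp
  smul_mem' := by intro c x hx t; simp [_root_.map_smul, hx t]

/-- coboundary span -/
def cobS : Submodule ℂ E := Submodule.span ℂ {y | ∃ s x, U s x - x = y}

end

variable {U : ℝ → E →L[ℂ] E}

lemma mem_invS {w : E} : w ∈ invS U ↔ ∀ t, U t w = w := Iff.rfl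

lemma hInt (hcont : ∀ v : E, Continuous fun t : ℝ => U t v) (v : E) (a b : ℝ) :
    IntervalIntegrable (fun t => U t v) volume a b :=
  ((hcont v).intervalIntegrable a b)

lemma A_norm_le (hunitary : ∀ (t : ℝ) (x : E), ‖U t x‖ = ‖x‖) (T : ℝ) (v : E) :
    ‖A U T v‖ ≤ ‖v‖ := by
  have h1 : ‖∫ t in (0:ℝ)..T, U t v‖ ≤ ‖v‖ * |T - 0| :=
    intervalIntegral.norm_integral_le_of_norm_le_const fun t _ => le_of_eq (hunitary t v)
  rcases eq_or_ne T 0 with rfl | hT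
  · simp [A]
  · have h2 : ‖A U T v‖ = |T|⁻¹ * ‖∫ t in (0:ℝ)..T, U t v‖ := by
      rw [A, norm_smul, Real.norm_eq_abs, one_div, abs_inv]
    rw [h2]
    rw [sub_zero] at h1
    calc |T|⁻¹ * ‖∫ t in (0:ℝ)..T, U t v‖ ≤ |T|⁻¹ * (‖v‖ * |T|) := by gcongr
      _ = ‖v‖ := by field_simp

lemma A_sub (hcont : ∀ v : E, Continuous fun t : ℝ => U t v) (T : ℝ) (y z : E) :
    A U T (y - z) = A U T y - A U T z := by
  unfold A
  have h : (fun t => U t (y - z)) = fun t => U t y - U t z := by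
    funext t; rw [map_sub]
  rw [h, intervalIntegral.integral_sub (hInt hcont y 0 T) (hInt hcont z 0 T), smul_sub]

lemma A_invariant {w : E} (hw : ∀ t, U t w = w) {T : ℝ} (hT : T ≠ 0) :
    A U T w = w := by
  unfold A
  simp only [hw, intervalIntegral.integral_const, sub_zero, smul_smul]
  rw [one_div, inv_mul_cancel₀ hT, one_smul]

/-- the unitary adjoint formula -/
lemma adj (hgrp : ∀ s t : ℝ, U (s + t) = (U s).comp (U t)) (h0 : U 0 = 1)
    (hunitary : ∀ (t : ℝ) (x : E), ‖U t x‖ = ‖x‖) (s : ℝ) (x w : E) :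
    (⟪U s x, w⟫ : ℂ) = ⟪x, U (-s) w⟫ := by
  have hs : U s (U (-s) w) = w := by
    have h1 : U s (U (-s) w) = U (s + -s) w := by rw [hgrp s (-s)]; rfl
    rw [h1, add_neg_cancel, h0]; rfl
  have hiso : (⟪U s x, U s (U (-s) w)⟫ : ℂ) = ⟪x, U (-s) w⟫ :=
    LinearIsometry.inner_map_map ⟨(U s : E →ₗ[ℂ] E), hunitary s⟩ x (U (-s) w)
  rw [← hiso, hs]

/-- orthogonal complement of the coboundary span is the invariant subspace -/
lemma cob_orth (hgrp : ∀ s t : ℝ, U (s + t) = (U s).comp (U t)) (h0 : U 0 = 1)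
    (hunitary : ∀ (t : ℝ) (x : E), ‖U t x‖ = ‖x‖) :
    (cobS U)ᗮ = invS U := by
  ext w
  simp only [Submodule.mem_orthogonal, mem_invS]
  constructor
  · intro h t
    apply ext_inner_left ℂ
    intro x
    have hgen : U (-t) x - x ∈ cobS U := Submodule.subset_span ⟨-t, x, rfl⟩
    have h1 := h _ hgen
    rw [inner_sub_left, sub_eq_zero] at h1
    have h2 : (⟪U (-t) x, w⟫ : ℂ) = ⟪x, U t w⟫ := by
      rw [adj hgrp h0 hunitary]; rw [neg_neg]
    rw [h2] at h1
    exact h1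
  · intro hw u hu
    induction hu using Submodule.span_induction with
    | mem y hy =>
      obtain ⟨s, x, rfl⟩ := hy
      rw [inner_sub_left, adj hgrp h0 hunitary, hw (-s), sub_self]
    | zero => simp
    | add y z _ _ hy hz => rw [inner_add_left, hy, hz, add_zero]
    | smul c y _ hy => rw [inner_smul_left, hy, mul_zero]

lemma invS_closed : IsClosed ((invS U : Set E)) := by
  have : (invS U : Set E) = ⋂ t : ℝ, {w | U t w = w} := by
    ext w; simp [mem_invS, Set.mem_iInter]
  rw [this]
  exact isClosed_iInter fun t => isClosed_eq (U t).continuous continuous_id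

/-- coboundary averages tend to zero -/
lemma A_cobound (hgrp : ∀ s t : ℝ, U (s + t) = (U s).comp (U t))
    (hunitary : ∀ (t : ℝ) (x : E), ‖U t x‖ = ‖x‖)
    (hcont : ∀ v : E, Continuous fun t : ℝ => U t v)
    (s : ℝ) (x : E) {l : Filter ℝ} (hl : Tendsto (fun T : ℝ => |T|) l atTop) :
    Tendsto (fun T => A U T (U s x - x)) l (nhds 0) := by
  have key : ∀ T : ℝ, (∫ t in (0:ℝ)..T, U t (U s x - x)) =
      (∫ t in T..(T+s), U t x) - ∫ t in (0:ℝ)..s, U t x := by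
    intro T
    have e1 : (fun t => U t (U s x - x)) = fun t => U (t + s) x - U t x := by
      funext t
      rw [map_sub]
      congr 1
      rw [hgrp t s]; rfl
    have hi : IntervalIntegrable (fun t => U (t + s) x) volume 0 T :=
      ((hcont x).comp (continuous_add_right s)).intervalIntegrable 0 T
    rw [e1, intervalIntegral.integral_sub hi (hInt hcont x 0 T)]
    rw [intervalIntegral.integral_comp_add_right (fun t => U t x), zero_add]
    have c1 : (∫ t in (0:ℝ)..s, U t x) + ∫ t in s..(T+s), U t x = ∫ t in (0:ℝ)..(T+s), U t x :=
      intervalIntegral.integral_add_adjacent_intervals (hInt hcont x 0 s) (hInt hcont x s (T+s))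
    have c2 : (∫ t in (0:ℝ)..T, U t x) + ∫ t in T..(T+s), U t x = ∫ t in (0:ℝ)..(T+s), U t x :=
      intervalIntegral.integral_add_adjacent_intervals (hInt hcont x 0 T) (hInt hcont x T (T+s))
    have e2 : (∫ t in s..(T+s), U t x) = (∫ t in (0:ℝ)..(T+s), U t x) - ∫ t in (0:ℝ)..s, U t x := by
      rw [← c1]; abel
    have e3 : (∫ t in T..(T+s), U t x) = (∫ t in (0:ℝ)..(T+s), U t x) - ∫ t in (0:ℝ)..T, U t x := by
      rw [← c2]; abel
    rw [e2, e3]; abel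
  have bound : ∀ T : ℝ, ‖A U T (U s x - x)‖ ≤ |T|⁻¹ * (2 * |s| * ‖x‖) := by
    intro T
    have b1 : ‖∫ t in T..(T+s), U t x‖ ≤ ‖x‖ * |T + s - T| :=
      intervalIntegral.norm_integral_le_of_norm_le_const fun t _ => le_of_eq (hunitary t x)
    have b2 : ‖∫ t in (0:ℝ)..s, U t x‖ ≤ ‖x‖ * |s - 0| :=
      intervalIntegral.norm_integral_le_of_norm_le_const fun t _ => le_of_eq (hunitary t x)
    rw [add_sub_cancel_left] at b1
    rw [sub_zero] at b2
    have : ‖A U T (U s x - x)‖ = |T|⁻¹ * ‖(∫ t in T..(T+s), U t x) - ∫ t in (0:ℝ)..s, U t x‖ := by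
      rw [A, key T, norm_smul, Real.norm_eq_abs, one_div, abs_inv]
    rw [this]
    have h3 : ‖(∫ t in T..(T+s), U t x) - ∫ t in (0:ℝ)..s, U t x‖ ≤ 2 * |s| * ‖x‖ := by
      calc ‖(∫ t in T..(T+s), U t x) - ∫ t in (0:ℝ)..s, U t x‖
          ≤ ‖∫ t in T..(T+s), U t x‖ + ‖∫ t in (0:ℝ)..s, U t x‖ := norm_sub_le _ _
        _ ≤ ‖x‖ * |s| + ‖x‖ * |s| := add_le_add b1 b2
        _ = 2 * |s| * ‖x‖ := by ring
    gcongr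
  apply squeeze_zero_norm bound
  have h4 : Tendsto (fun T : ℝ => |T|⁻¹) l (nhds 0) := tendsto_inv_atTop_zero.comp hl
  have := h4.mul_const (2 * |s| * ‖x‖)
  simpa using this

/-- averages of closure-of-coboundary vectors tend to zero -/
lemma A_closure_zero (hgrp : ∀ s t : ℝ, U (s + t) = (U s).comp (U t))
    (hunitary : ∀ (t : ℝ) (x : E), ‖U t x‖ = ‖x‖)
    (hcont : ∀ v : E, Continuous fun t : ℝ => U t v)
    {l : Filter ℝ} [l.NeBot] (hl : Tendsto (fun T : ℝ => |T|) l atTop)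
    {y : E} (hy : y ∈ closure ((cobS U : Set E))) :
    Tendsto (fun T => A U T y) l (nhds 0) := by
  have hspan : ∀ z ∈ cobS U, Tendsto (fun T => A U T z) l (nhds 0) := by
    intro z hz
    induction hz using Submodule.span_induction with
    | mem y hy =>
      obtain ⟨s, x, rfl⟩ := hy
      exact A_cobound hgrp hunitary hcont s x hl
    | zero =>
      have : (fun T => A U T (0:E)) = fun _ => (0:E) := by
        funext T; simp [A]
      rw [this]; exact tendsto_const_nhds
    | add y z _ _ hy hz =>
      have h1 := hy.add hz
      rw [add_zero] at h1
      apply h1.congr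
      intro T
      unfold A
      have : (fun t => U t (y + z)) = fun t => U t y + U t z := by funext t; rw [map_add]
      rw [this, intervalIntegral.integral_add (hInt hcont y 0 T) (hInt hcont z 0 T), smul_add]
    | smul c y _ hy =>
      have h1 := hy.const_smul c
      rw [smul_zero] at h1
      apply h1.congr
      intro T
      unfold A
      have : (fun t => U t (c • y)) = fun t => c • U t y := by funext t; rw [_root_.map_smul]
      rw [this, intervalIntegral.integral_smul, smul_comm]
  rw [NormedAddCommGroup.tendsto_nhds_zero]
  intro ε hε
  obtain ⟨z, hzN, hz⟩ : ∃ z ∈ (cobS U : Set E), ‖y - z‖ < ε/2 := by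
    obtain ⟨z, hz1, hz2⟩ := Metric.mem_closure_iff.1 hy (ε/2) (by positivity)
    exact ⟨z, hz1, by rwa [dist_eq_norm] at hz2⟩
  have h2 : ∀ᶠ T in l, ‖A U T z‖ < ε/2 :=
    (NormedAddCommGroup.tendsto_nhds_zero.1 (hspan z hzN)) (ε/2) (by positivity)
  filter_upwards [h2] with T hT
  have hdec : A U T y = A U T z + A U T (y - z) := by
    rw [A_sub hcont]; abel
  calc ‖A U T y‖ ≤ ‖A U T z‖ + ‖A U T (y - z)‖ := by rw [hdec]; exact norm_add_le _ _
    _ < ε/2 + ε/2 := add_lt_add_of_lt_of_le hT ((A_norm_le hunitary T (y - z)).trans hz.le)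
    _ = ε := by ring

end Stmt15Aux

open Stmt15Aux in
/-- Von Neumann mean ergodic theorem with identification of the limit: for a strongly
continuous one-parameter unitary group `(U_t)` on a Hilbert space, the time averages
`(1/T)∫₀^T U_t v dt` converge in norm, as `T → +∞` and as `T → -∞`, to the orthogonal
projection of `v` onto the invariant vectors (characterized by being invariant with
`v - Pv` orthogonal to every invariant vector). -/
theorem stmt_15
    {E : Type*} [NormedAddCommGroup E] [InnerProductSpace ℂ E] [CompleteSpace E]
    (U : ℝ → E →L[ℂ] E)
    (hgrp : ∀ s t : ℝ, U (s + t) = (U s).comp (U t)) (h0 : U 0 = 1)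
    (hunitary : ∀ (t : ℝ) (x : E), ‖U t x‖ = ‖x‖)
    (hcont : ∀ v : E, Continuous fun t : ℝ => U t v) :
    ∀ v : E, ∃ Pv : E,
      (∀ t : ℝ, U t Pv = Pv) ∧
      (∀ w : E, (∀ t : ℝ, U t w = w) → (⟪v - Pv, w⟫ : ℂ) = 0) ∧
      Filter.Tendsto (fun T : ℝ => (1 / T) • ∫ t in (0 : ℝ)..T, U t v)
        Filter.atTop (nhds Pv) ∧
      Filter.Tendsto (fun T : ℝ => (1 / T) • ∫ t in (0 : ℝ)..T, U t v)
        Filter.atBot (nhds Pv) := by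
  intro v
  haveI : CompleteSpace (invS U) := (invS_closed (U := U)).completeSpace_coe
  set Pv : E := ((invS U).orthogonalProjectionOnto v : E) with hPv
  have hPmem : Pv ∈ invS U := ((invS U).orthogonalProjectionOnto v).2
  have horthmem : v - Pv ∈ (invS U)ᗮ := Submodule.sub_starProjection_mem_orthogonal v
  have hclos : v - Pv ∈ closure ((cobS U : Set E)) := by
    have h1 : (invS U)ᗮ = (cobS U).topologicalClosure := by
      rw [← cob_orth hgrp h0 hunitary, Submodule.orthogonal_orthogonal_eq_closure]
    rw [h1] at horthmem
    rwa [← Submodule.topologicalClosure_coe]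
  refine ⟨Pv, fun t => hPmem t, ?_, ?_, ?_⟩
  · intro w hw
    have h2 : (⟪w, v - Pv⟫ : ℂ) = 0 := (Submodule.mem_orthogonal _ _).1 horthmem w hw
    rw [← inner_conj_symm, h2, map_zero]
  · have hz := A_closure_zero hgrp hunitary hcont
      (l := Filter.atTop) tendsto_abs_atTop_atTop hclos
    have hmain : Filter.Tendsto (fun T : ℝ => Pv + A U T (v - Pv)) Filter.atTop (nhds Pv) := by
      have := (tendsto_const_nhds : Filter.Tendsto (fun _ : ℝ => Pv) Filter.atTop (nhds Pv)).add hz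
      rwa [add_zero] at this
    apply hmain.congr'
    filter_upwards [eventually_ne_atTop (0:ℝ)] with T hT
    rw [A_sub hcont, A_invariant (fun t => hPmem t) hT]
    show Pv + (A U T v - Pv) = (1 / T) • ∫ t in (0 : ℝ)..T, U t v
    rw [← A]; abel
  · have hz := A_closure_zero hgrp hunitary hcont
      (l := Filter.atBot) tendsto_abs_atBot_atTop hclos
    have hmain : Filter.Tendsto (fun T : ℝ => Pv + A U T (v - Pv)) Filter.atBot (nhds Pv) := by
      have := (tendsto_const_nhds : Filter.Tendsto (fun _ : ℝ => Pv) Filter.atBot (nhds Pv)).add hz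
      rwa [add_zero] at this
    apply hmain.congr'
    filter_upwards [eventually_ne_atBot (0:ℝ)] with T hT
    rw [A_sub hcont, A_invariant (fun t => hPmem t) hT]
    show Pv + (A U T v - Pv) = (1 / T) • ∫ t in (0 : ℝ)..T, U t v
    rw [← A]; abel
end
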